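/- Let f, g : [0, T) → ℝ be C¹ functions satisfying f'(t) ≥ f(t)·g(t) and g'(t) ≥ f(t)·g(t) for all t ∈ (0, T), with f(0) > 0 and g(0) > 0. Then f and g remain positive on [0, T), and the function h(t) = √(f(t)·g(t)) satisfies h'(t) ≥ h(t)² wherever differentiable; consequently T ≤ 1/√(f(0)·g(0)). -/

import Mathlib

theorem stmt_6 (T : ℝ) (hT : 0 < T) (f g : ℝ → ℝ)
    (hf : ContDiffOn ℝ 1 f (Set.Ico 0 T))
    (hg : ContDiffOn ℝ 1 g (Set.Ico 0 T))
    (hf0 : 0 < f 0) (hg0 : 0 < g 0)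
    (hf' : ∀ t ∈ Set.Ioo 0 T, deriv f t ≥ f t * g t)
    (hg' : ∀ t ∈ Set.Ioo 0 T, deriv g t ≥ f t * g t) :
    T ≤ 1 / Real.sqrt (f 0 * g 0) := by
  have hcf : ContinuousOn f (Set.Ico 0 T) := hf.continuousOn
  have hcg : ContinuousOn g (Set.Ico 0 T) := hg.continuousOn
  have hdf : ∀ t ∈ Set.Ioo (0:ℝ) T, DifferentiableAt ℝ f t := by
    intro t ht
    exact ((hf.differentiableOn one_ne_zero) t ⟨ht.1.le, ht.2⟩).differentiableAt
      (Ico_mem_nhds ht.1 ht.2)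
  have hdg : ∀ t ∈ Set.Ioo (0:ℝ) T, DifferentiableAt ℝ g t := by
    intro t ht
    exact ((hg.differentiableOn one_ne_zero) t ⟨ht.1.le, ht.2⟩).differentiableAt
      (Ico_mem_nhds ht.1 ht.2)
  -- positivity of f and g on [0, T)
  have hpos : ∀ s ∈ Set.Ico (0:ℝ) T, 0 < f s ∧ 0 < g s := by
    intro s hs
    by_contra hcon
    have hcon' : f s ≤ 0 ∨ g s ≤ 0 := by
      rcases le_or_gt (f s) 0 with h | h
      · exact Or.inl h
      · rcases le_or_gt (g s) 0 with h2 | h2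
        · exact Or.inr h2
        · exact absurd ⟨h, h2⟩ hcon
    have hsub : Set.Icc (0:ℝ) s ⊆ Set.Ico 0 T := fun x hx => ⟨hx.1, lt_of_le_of_lt hx.2 hs.2⟩
    set B : Set ℝ := Set.Icc 0 s ∩ (fun t => min (f t) (g t)) ⁻¹' Set.Iic 0 with hBdef
    have hm : ContinuousOn (fun t => min (f t) (g t)) (Set.Icc 0 s) :=
      ((hcf.mono hsub).inf (hcg.mono hsub))
    have hBclosed : IsClosed B :=
      hm.preimage_isClosed_of_isClosed isClosed_Icc isClosed_Iic
    have hBne : B.Nonempty := by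
      refine ⟨s, ⟨hs.1, le_rfl⟩, ?_⟩
      simp only [Set.mem_preimage, Set.mem_Iic]
      rcases hcon' with h | h
      · exact le_trans (min_le_left _ _) h
      · exact le_trans (min_le_right _ _) h
    have hBbdd : BddBelow B := ⟨0, fun x hx => hx.1.1⟩
    set t₀ := sInf B with ht₀def
    have ht₀mem : t₀ ∈ B := hBclosed.csInf_mem hBne hBbdd
    have ht₀le : min (f t₀) (g t₀) ≤ 0 := ht₀mem.2
    have ht₀pos : 0 < t₀ := by
      rcases lt_or_eq_of_le ht₀mem.1.1 with h | h
      · exact h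
      · exfalso; rw [← h] at ht₀le
        have : 0 < min (f 0) (g 0) := lt_min hf0 hg0
        linarith
    have hposlt : ∀ x ∈ Set.Ico (0:ℝ) t₀, 0 < f x ∧ 0 < g x := by
      intro x hx
      by_contra h
      have h' : min (f x) (g x) ≤ 0 := by
        by_contra h''
        push_neg at h''
        exact h ⟨lt_of_lt_of_le h'' (min_le_left _ _), lt_of_lt_of_le h'' (min_le_right _ _)⟩
      have hxle : x ≤ s := le_trans (le_of_lt hx.2) ht₀mem.1.2
      have hxB : x ∈ B := ⟨⟨hx.1, hxle⟩, h'⟩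
      exact absurd (csInf_le hBbdd hxB) (not_le.mpr hx.2)
    have hsub2 : Set.Icc (0:ℝ) t₀ ⊆ Set.Ico 0 T :=
      fun x hx => hsub ⟨hx.1, le_trans hx.2 ht₀mem.1.2⟩
    have hintsub : ∀ x ∈ Set.Ioo (0:ℝ) t₀, x ∈ Set.Ioo (0:ℝ) T :=
      fun x hx => ⟨hx.1, lt_of_lt_of_le hx.2 (le_trans ht₀mem.1.2 hs.2.le)⟩
    have hmf : MonotoneOn f (Set.Icc 0 t₀) := by
      apply monotoneOn_of_deriv_nonneg (convex_Icc 0 t₀) (hcf.mono hsub2)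
      · intro x hx
        rw [interior_Icc] at hx
        exact (hdf x (hintsub x hx)).differentiableWithinAt
      · intro x hx
        rw [interior_Icc] at hx
        have h1 := hf' x (hintsub x hx)
        have h2 := hposlt x ⟨hx.1.le, hx.2⟩
        nlinarith [h2.1, h2.2]
    have hmg : MonotoneOn g (Set.Icc 0 t₀) := by
      apply monotoneOn_of_deriv_nonneg (convex_Icc 0 t₀) (hcg.mono hsub2)
      · intro x hx
        rw [interior_Icc] at hx
        exact (hdg x (hintsub x hx)).differentiableWithinAt
      · intro x hx
        rw [interior_Icc] at hx
        have h1 := hg' x (hintsub x hx)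
        have h2 := hposlt x ⟨hx.1.le, hx.2⟩
        nlinarith [h2.1, h2.2]
    have hf0t := hmf ⟨le_rfl, ht₀pos.le⟩ ⟨ht₀pos.le, le_rfl⟩ ht₀pos.le
    have hg0t := hmg ⟨le_rfl, ht₀pos.le⟩ ⟨ht₀pos.le, le_rfl⟩ ht₀pos.le
    have : 0 < min (f t₀) (g t₀) := lt_min (by linarith) (by linarith)
    linarith
  -- the function φ = 1/√(fg) has derivative ≤ -1 on (0,T)
  set φ : ℝ → ℝ := fun t => (Real.sqrt (f t * g t))⁻¹ with hφdef
  have key : ∀ t ∈ Set.Ioo (0:ℝ) T, ∃ d, HasDerivAt φ d t ∧ d ≤ -1 := by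
    intro t ht
    have hft := hpos t ⟨ht.1.le, ht.2⟩
    have hpt : 0 < f t * g t := mul_pos hft.1 hft.2
    have hp : HasDerivAt (fun u => f u * g u) (deriv f t * g t + f t * deriv g t) t :=
      ((hdf t ht).hasDerivAt.mul (hdg t ht).hasDerivAt)
    have hsq : HasDerivAt (fun u => Real.sqrt (f u * g u))
        ((deriv f t * g t + f t * deriv g t) / (2 * Real.sqrt (f t * g t))) t :=
      hp.sqrt (ne_of_gt hpt)
    have hs0 : 0 < Real.sqrt (f t * g t) := Real.sqrt_pos.mpr hpt
    have hinv := hsq.inv (ne_of_gt hs0)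
    refine ⟨_, hinv, ?_⟩
    set s := Real.sqrt (f t * g t) with hsdef
    have hs2 : s ^ 2 = f t * g t := Real.sq_sqrt hpt.le
    have hfg : 2 * s ≤ f t + g t := by
      have h1 : Real.sqrt (f t) * Real.sqrt (g t) = s := (Real.sqrt_mul hft.1.le _).symm
      nlinarith [sq_nonneg (Real.sqrt (f t) - Real.sqrt (g t)),
        Real.sq_sqrt hft.1.le, Real.sq_sqrt hft.2.le]
    have hp' : 2 * s ^ 3 ≤ deriv f t * g t + f t * deriv g t := by
      have h1 := hf' t ht
      have h2 := hg' t ht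
      nlinarith [hft.1, hft.2, hs0]
    have h3 : s ^ 2 ≤ (deriv f t * g t + f t * deriv g t) / (2 * s) := by
      rw [le_div_iff₀ (by positivity)]
      nlinarith
    rw [div_le_iff₀ (by positivity : (0:ℝ) < s ^ 2)]
    nlinarith
  -- conclude
  have hφpos : ∀ t ∈ Set.Ico (0:ℝ) T, 0 < φ t := by
    intro t ht
    have := hpos t ht
    exact inv_pos.mpr (Real.sqrt_pos.mpr (mul_pos this.1 this.2))
  have hbound : ∀ b ∈ Set.Ioo (0:ℝ) T, b < φ 0 := by
    intro b hb
    have hsubb : Set.Icc (0:ℝ) b ⊆ Set.Ico 0 T := fun x hx => ⟨hx.1, lt_of_le_of_lt hx.2 hb.2⟩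
    have hanti : AntitoneOn (fun t => φ t + t) (Set.Icc 0 b) := by
      apply antitoneOn_of_deriv_nonpos (convex_Icc 0 b)
      · apply ContinuousOn.add _ continuousOn_id
        apply ContinuousOn.inv₀
        · exact (Real.continuous_sqrt.comp_continuousOn
            ((hcf.mono hsubb).mul (hcg.mono hsubb)))
        · intro x hx
          have := hpos x (hsubb hx)
          exact ne_of_gt (Real.sqrt_pos.mpr (mul_pos this.1 this.2))
      · intro x hx
        rw [interior_Icc] at hx
        obtain ⟨d, hd, _⟩ := key x ⟨hx.1, lt_trans hx.2 hb.2⟩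
        exact (hd.add (hasDerivAt_id x)).differentiableAt.differentiableWithinAt
      · intro x hx
        rw [interior_Icc] at hx
        obtain ⟨d, hd, hdle⟩ := key x ⟨hx.1, lt_trans hx.2 hb.2⟩
        have hψ : HasDerivAt (fun t => φ t + t) (d + 1) x := hd.add (hasDerivAt_id x)
        rw [hψ.deriv]
        linarith
    have h1 := hanti (Set.left_mem_Icc.mpr hb.1.le) (Set.right_mem_Icc.mpr hb.1.le) hb.1.le
    have h2 := hφpos b ⟨hb.1.le, hb.2⟩
    simp only at h1
    linarith
  have hφ0 : φ 0 = 1 / Real.sqrt (f 0 * g 0) := by rw [one_div]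
  rw [← hφ0]
  by_contra h
  push_neg at h
  have hφ0pos : 0 < φ 0 := hφpos 0 ⟨le_rfl, hT⟩
  exact absurd (hbound (φ 0) ⟨hφ0pos, h⟩) (lt_irrefl _)
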